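/- Let H ∈ C¹(ℝⁿ \ {0}) be positively homogeneous of degree 1 with H(ξ) > 0 for all ξ ≠ 0, extended by H(0) = 0, and assume the unit ball B₁ᴴ = {ξ : H(ξ) < 1} is strictly convex. Then condition (1.12), namely sgn⟨H(ξ)∇H(ξ), H*(x)∇H*(x)⟩ = sgn⟨ξ, x⟩ for all ξ, x ∈ ℝⁿ, is equivalent to condition (7.1): for all ξ, η ∈ ℝⁿ, ⟨H(ξ)∇H(ξ), η⟩ = 0 if and only if ⟨ξ, H(η)∇H(η)⟩ = 0. -/

import Mathlib

open scoped InnerProductSpace Classical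
open Set Filter Topology

noncomputable section

/-- The dual function `H*(x) := sup_{ξ ∈ S^{n-1}} ⟨x, ξ⟩ / H(ξ)`. -/
def dualFn {n : ℕ} (H : EuclideanSpace ℝ (Fin n) → ℝ) (x : EuclideanSpace ℝ (Fin n)) : ℝ :=
  ⨆ ξ : Metric.sphere (0 : EuclideanSpace ℝ (Fin n)) 1,
    ⟪x, (ξ : EuclideanSpace ℝ (Fin n))⟫_ℝ / H ξ

/-- The map `ξ ↦ H(ξ)∇H(ξ)`, understood to be `0` at the origin. -/
def Psi {n : ℕ} (H : EuclideanSpace ℝ (Fin n) → ℝ) (ξ : EuclideanSpace ℝ (Fin n)) :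
    EuclideanSpace ℝ (Fin n) :=
  if ξ = 0 then 0 else H ξ • gradient H ξ

variable {n : ℕ}


local notation "E" => EuclideanSpace ℝ (Fin n)

lemma myDiffAt (H : E → ℝ) (hreg : ContDiffOn ℝ 1 H {(0:E)}ᶜ) {ξ : E} (hξ : ξ ≠ 0) :
    DifferentiableAt ℝ H ξ := by
  have h1 : DifferentiableOn ℝ H {(0:E)}ᶜ := hreg.differentiableOn one_ne_zero
  exact h1.differentiableAt (isOpen_compl_singleton.mem_nhds hξ)

lemma myLineDeriv (H : E → ℝ) (hreg : ContDiffOn ℝ 1 H {(0:E)}ᶜ) {ξ : E} (hξ : ξ ≠ 0) (v : E) :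
    HasDerivAt (fun t : ℝ => H (ξ + t • v)) ⟪gradient H ξ, v⟫_ℝ 0 := by
  have hd := (myDiffAt H hreg hξ).hasGradientAt.hasFDerivAt
  have hγ : HasDerivAt (fun t : ℝ => ξ + t • v) v 0 := by
    simpa using ((hasDerivAt_id (0:ℝ)).smul_const v).const_add ξ
  have hd' : HasFDerivAt H ((InnerProductSpace.toDual ℝ E) (gradient H ξ)) (ξ + (0:ℝ) • v) := by
    simpa using hd
  have h2 := hd'.comp_hasDerivAt 0 hγ
  simpa [InnerProductSpace.toDual_apply_apply, Function.comp_def] using h2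

lemma myNonneg (H : E → ℝ) (hH0 : H 0 = 0) (hpos : ∀ ξ : E, ξ ≠ 0 → 0 < H ξ) (a : E) :
    0 ≤ H a := by
  rcases eq_or_ne a 0 with rfl | h
  · simp [hH0]
  · exact (hpos a h).le

lemma myEuler (H : E → ℝ) (hreg : ContDiffOn ℝ 1 H {(0:E)}ᶜ)
    (hhom : ∀ t : ℝ, 0 < t → ∀ ξ : E, ξ ≠ 0 → H (t • ξ) = t * H ξ)
    {ξ : E} (hξ : ξ ≠ 0) : ⟪gradient H ξ, ξ⟫_ℝ = H ξ := by
  have h1 := myLineDeriv H hreg hξ ξ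
  have h2 : HasDerivAt (fun t : ℝ => (1 + t) * H ξ) (H ξ) 0 := by
    simpa using (((hasDerivAt_id (0:ℝ)).const_add 1).mul_const (H ξ))
  have heq : (fun t : ℝ => (1 + t) * H ξ) =ᶠ[𝓝 (0:ℝ)] fun t => H (ξ + t • ξ) := by
    filter_upwards [eventually_gt_nhds (by norm_num : (-1:ℝ) < 0)] with t ht
    have h3 : ξ + t • ξ = (1 + t) • ξ := by
      rw [add_smul]; simp
    rw [h3, hhom (1 + t) (by linarith) ξ hξ]
  exact ((h2.congr_of_eventuallyEq heq.symm).unique h1).symm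

lemma mySubadd (H : E → ℝ)
    (hhom : ∀ t : ℝ, 0 < t → ∀ ξ : E, ξ ≠ 0 → H (t • ξ) = t * H ξ)
    (hH0 : H 0 = 0) (hpos : ∀ ξ : E, ξ ≠ 0 → 0 < H ξ)
    (hconv : Convex ℝ {ξ : E | H ξ < 1}) (a b : E) : H (a + b) ≤ H a + H b := by
  by_contra hcon
  push_neg at hcon
  rcases eq_or_ne a 0 with rfl | ha
  · simp only [zero_add] at hcon; have := myNonneg H hH0 hpos b; linarith [hH0 ▸ hcon]
  rcases eq_or_ne b 0 with rfl | hb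
  · simp only [add_zero] at hcon; have := myNonneg H hH0 hpos a; linarith
  rcases eq_or_ne (a + b) 0 with hab | hab
  · rw [hab, hH0] at hcon
    have := myNonneg H hH0 hpos a; have := myNonneg H hH0 hpos b; linarith
  set ε := (H (a + b) - H a - H b) / 3 with hε
  have hεpos : 0 < ε := by simp only [hε]; linarith
  set s := H a + ε with hs
  set t := H b + ε with ht
  have hspos : 0 < s := by have := myNonneg H hH0 hpos a; simp only [hs]; linarith
  have htpos : 0 < t := by have := myNonneg H hH0 hpos b; simp only [ht]; linarith
  have hmema : s⁻¹ • a ∈ {ξ : E | H ξ < 1} := by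
    simp only [mem_setOf_eq, hhom s⁻¹ (by positivity) a ha]
    rw [inv_mul_lt_iff₀ hspos, mul_one]
    simp only [hs]; linarith
  have hmemb : t⁻¹ • b ∈ {ξ : E | H ξ < 1} := by
    simp only [mem_setOf_eq, hhom t⁻¹ (by positivity) b hb]
    rw [inv_mul_lt_iff₀ htpos, mul_one]
    simp only [ht]; linarith
  have hcomb := hconv hmema hmemb (by positivity : (0:ℝ) ≤ s / (s + t))
    (by positivity : (0:ℝ) ≤ t / (s + t)) (by field_simp)
  have hrw : (s / (s + t)) • s⁻¹ • a + (t / (s + t)) • t⁻¹ • b = (s + t)⁻¹ • (a + b) := by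
    rw [smul_smul, smul_smul, smul_add]
    congr 1 <;> congr 1 <;> field_simp <;> ring
  rw [hrw, mem_setOf_eq, hhom (s+t)⁻¹ (by positivity) _ hab,
    inv_mul_lt_iff₀ (by positivity), mul_one] at hcomb
  simp only [hs, ht, hε] at hcomb
  linarith

lemma mySupport (H : E → ℝ) (hreg : ContDiffOn ℝ 1 H {(0:E)}ᶜ)
    (hhom : ∀ t : ℝ, 0 < t → ∀ ξ : E, ξ ≠ 0 → H (t • ξ) = t * H ξ)
    (hH0 : H 0 = 0) (hpos : ∀ ξ : E, ξ ≠ 0 → 0 < H ξ)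
    (hconv : Convex ℝ {ξ : E | H ξ < 1})
    {ξ : E} (hξ : ξ ≠ 0) (z : E) : ⟪gradient H ξ, z⟫_ℝ ≤ H z := by
  rcases eq_or_ne z 0 with rfl | hz
  · simp [hH0]
  have h1 := (myLineDeriv H hreg hξ z).tendsto_slope_zero_right
  have h2 : ∀ᶠ t in 𝓝[>] (0:ℝ),
      t⁻¹ • ((fun s : ℝ => H (ξ + s • z)) (0 + t) - (fun s : ℝ => H (ξ + s • z)) 0) ≤ H z := by
    filter_upwards [self_mem_nhdsWithin] with t (htpos : 0 < t)
    have hsub := mySubadd H hhom hH0 hpos hconv ξ (t • z)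
    rw [hhom t htpos z hz] at hsub
    simp only [smul_eq_mul, zero_add, zero_smul, add_zero]
    rw [inv_mul_le_iff₀ htpos]
    nlinarith
  exact le_of_tendsto h1 h2

lemma myGradHomog (H : E → ℝ) (hreg : ContDiffOn ℝ 1 H {(0:E)}ᶜ)
    (hhom : ∀ t : ℝ, 0 < t → ∀ ξ : E, ξ ≠ 0 → H (t • ξ) = t * H ξ)
    {t : ℝ} (ht : 0 < t) {ξ : E} (hξ : ξ ≠ 0) : gradient H (t • ξ) = gradient H ξ := by
  have htξ : t • ξ ≠ 0 := smul_ne_zero ht.ne' hξ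
  have hd1 : HasFDerivAt H (InnerProductSpace.toDual ℝ E (gradient H (t • ξ))) (t • ξ) :=
    (myDiffAt H hreg htξ).hasGradientAt.hasFDerivAt
  have hd0 : HasFDerivAt H (InnerProductSpace.toDual ℝ E (gradient H ξ)) ξ :=
    (myDiffAt H hreg hξ).hasGradientAt.hasFDerivAt
  have hmap : HasFDerivAt (fun w : E => t • w) (t • ContinuousLinearMap.id ℝ E) ξ :=
    (ContinuousLinearMap.id ℝ E).hasFDerivAt.const_smul t
  have hcomp := hd1.comp ξ hmap
  have heq : (fun w : E => t * H w) =ᶠ[𝓝 ξ] (H ∘ fun w : E => t • w) := by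
    filter_upwards [isOpen_compl_singleton.mem_nhds hξ] with w (hw : w ≠ 0)
    simp [Function.comp, hhom t ht w hw]
  have hd2 : HasFDerivAt (fun w : E => t * H w)
      (t • InnerProductSpace.toDual ℝ E (gradient H ξ)) ξ := hd0.const_mul t
  have hkey := (hcomp.congr_of_eventuallyEq heq).unique hd2
  refine ext_inner_right ℝ fun v => ?_
  have h3 := DFunLike.congr_fun hkey v
  simp only [ContinuousLinearMap.comp_apply, ContinuousLinearMap.smul_apply,
    ContinuousLinearMap.id_apply, InnerProductSpace.toDual_apply_apply, smul_eq_mul,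
    real_inner_smul_right] at h3
  have h4 : ⟪gradient H (t • ξ), v⟫_ℝ = ⟪gradient H ξ, v⟫_ℝ := by
    have := mul_left_cancel₀ ht.ne' h3
    linarith
  exact h4

lemma myGradContOn (H : E → ℝ) (hreg : ContDiffOn ℝ 1 H {(0:E)}ᶜ) :
    ContinuousOn (fun ξ : E => gradient H ξ) {(0:E)}ᶜ := by
  have h1 : ContinuousOn (fderiv ℝ H) {(0:E)}ᶜ :=
    hreg.continuousOn_fderiv_of_isOpen isOpen_compl_singleton le_rfl
  exact ((InnerProductSpace.toDual ℝ E).symm.continuous.comp_continuousOn h1 : _)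

lemma myPsiContOn (H : E → ℝ) (hreg : ContDiffOn ℝ 1 H {(0:E)}ᶜ) :
    ContinuousOn (fun ξ : E => H ξ • gradient H ξ) {(0:E)}ᶜ :=
  (hreg.continuousOn).smul (myGradContOn H hreg)

lemma myCompactK (H : E → ℝ) [Nontrivial E] (hreg : ContDiffOn ℝ 1 H {(0:E)}ᶜ)
    (hhom : ∀ t : ℝ, 0 < t → ∀ ξ : E, ξ ≠ 0 → H (t • ξ) = t * H ξ)
    (hH0 : H 0 = 0) (hpos : ∀ ξ : E, ξ ≠ 0 → 0 < H ξ) :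
    IsCompact {w : E | H w ≤ 1} := by
  have hsph : IsCompact (Metric.sphere (0:E) 1) := isCompact_sphere 0 1
  have hsubset : Metric.sphere (0:E) 1 ⊆ {(0:E)}ᶜ := fun w hw => by
    simp only [mem_sphere_zero_iff_norm] at hw
    simp only [mem_compl_iff, mem_singleton_iff]
    intro h; rw [h] at hw; simp at hw
  obtain ⟨u, hu, humin⟩ := hsph.exists_isMinOn (NormedSpace.sphere_nonempty.2 zero_le_one)
    (hreg.continuousOn.mono hsubset)
  have hm : 0 < H u := hpos u (hsubset hu)
  have hlow : ∀ w : E, w ≠ 0 → H u * ‖w‖ ≤ H w := by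
    intro w hw
    have hnorm : ‖w‖ ≠ 0 := norm_ne_zero_iff.2 hw
    have hmem : ‖w‖⁻¹ • w ∈ Metric.sphere (0:E) 1 := by
      simp [norm_smul, inv_mul_cancel₀ hnorm]
    have := humin hmem
    have h2 : H u ≤ H (‖w‖⁻¹ • w) := this
    rw [hhom _ (by positivity) w hw] at h2
    have h3 : ‖w‖ * (H w * ‖w‖⁻¹) = H w := by field_simp
    nlinarith [mul_le_mul_of_nonneg_left h2 (norm_nonneg w)]
  have hclosed : IsClosed {w : E | H w ≤ 1} := by
    rw [← isOpen_compl_iff]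
    have : {w : E | H w ≤ 1}ᶜ = {(0:E)}ᶜ ∩ H ⁻¹' (Set.Ioi 1) := by
      ext w
      simp only [mem_compl_iff, mem_setOf_eq, not_le, mem_inter_iff, mem_preimage, mem_Ioi,
        mem_singleton_iff]
      constructor
      · intro h
        refine ⟨fun h0 => ?_, h⟩
        rw [h0, hH0] at h; linarith
      · exact fun h => h.2
    rw [this]
    exact hreg.continuousOn.isOpen_inter_preimage isOpen_compl_singleton isOpen_Ioi
  have hbdd : Bornology.IsBounded {w : E | H w ≤ 1} := by
    apply (Metric.isBounded_closedBall (x := (0:E)) (r := (H u)⁻¹)).subset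
    intro w hw
    simp only [Metric.mem_closedBall, dist_zero_right]
    rcases eq_or_ne w 0 with rfl | hw0
    · simp; positivity
    · have h2 : H u * ‖w‖ ≤ 1 := le_trans (hlow w hw0) hw
      rw [← one_div, le_div_iff₀ hm]
      linarith
  exact Metric.isCompact_of_isClosed_isBounded hclosed hbdd

/-- Characterization of maximizers of `⟪x, ·⟫` over `K = {H ≤ 1}`. -/
lemma myMaxChar (H : E → ℝ) (hreg : ContDiffOn ℝ 1 H {(0:E)}ᶜ)
    (hhom : ∀ t : ℝ, 0 < t → ∀ ξ : E, ξ ≠ 0 → H (t • ξ) = t * H ξ)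
    (hH0 : H 0 = 0) (hpos : ∀ ξ : E, ξ ≠ 0 → 0 < H ξ)
    {x z : E} (hx : x ≠ 0) (hzK : H z ≤ 1)
    (hzmax : ∀ w : E, H w ≤ 1 → ⟪x, w⟫_ℝ ≤ ⟪x, z⟫_ℝ) :
    0 < ⟪x, z⟫_ℝ ∧ H z = 1 ∧ gradient H z = (⟪x, z⟫_ℝ)⁻¹ • x := by
  have hHx : 0 < H x := hpos x hx
  have hMpos : 0 < ⟪x, z⟫_ℝ := by
    have hmem : H ((H x)⁻¹ • x) ≤ 1 := by
      rw [hhom _ (by positivity) x hx, inv_mul_cancel₀ hHx.ne']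
    have h1 := hzmax _ hmem
    rw [real_inner_smul_right] at h1
    have h2 : 0 < (H x)⁻¹ * ⟪x, x⟫_ℝ := by
      rw [real_inner_self_eq_norm_sq]
      have : 0 < ‖x‖ := norm_pos_iff.2 hx
      positivity
    linarith
  have hz0 : z ≠ 0 := by
    rintro rfl
    rw [inner_zero_right] at hMpos; exact lt_irrefl 0 hMpos
  have hHz1 : H z = 1 := by
    rcases lt_or_eq_of_le hzK with hlt | heq
    · exfalso
      have hHz : 0 < H z := hpos z hz0
      have hmem : H ((H z)⁻¹ • z) ≤ 1 := by
        rw [hhom _ (by positivity) z hz0, inv_mul_cancel₀ hHz.ne']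
      have h1 := hzmax _ hmem
      rw [real_inner_smul_right] at h1
      have h2 : 1 < (H z)⁻¹ := (one_lt_inv₀ hHz).2 hlt
      nlinarith
    · exact heq
  refine ⟨hMpos, hHz1, ?_⟩
  set M := ⟪x, z⟫_ℝ with hM
  -- every w satisfies ⟪x, w⟫ ≤ M * H w
  have hbound : ∀ w : E, ⟪x, w⟫_ℝ ≤ M * H w := by
    intro w
    rcases eq_or_ne w 0 with rfl | hw0
    · simp [hH0]
    · have hHw : 0 < H w := hpos w hw0
      have hmem : H ((H w)⁻¹ • w) ≤ 1 := by
        rw [hhom _ (by positivity) w hw0, inv_mul_cancel₀ hHw.ne']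
      have h1 := hzmax _ hmem
      rw [real_inner_smul_right] at h1
      have h2 := mul_le_mul_of_nonneg_left h1 hHw.le
      rw [← mul_assoc, mul_inv_cancel₀ hHw.ne', one_mul] at h2
      linarith
  -- g has a global minimum at z
  have hmin : IsLocalMin (fun w : E => M * H w - ⟪x, w⟫_ℝ) z := by
    apply Filter.Eventually.of_forall
    intro w
    have := hbound w
    simp only [hHz1, mul_one]
    linarith
  have hdz : HasFDerivAt H (InnerProductSpace.toDual ℝ E (gradient H z)) z :=
    (myDiffAt H hreg hz0).hasGradientAt.hasFDerivAt
  have hdg : HasFDerivAt (fun w : E => M * H w - ⟪x, w⟫_ℝ)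
      (M • InnerProductSpace.toDual ℝ E (gradient H z) - innerSL ℝ x) z :=
    (hdz.const_mul M).sub (innerSL ℝ x).hasFDerivAt
  have hfz := hmin.fderiv_eq_zero
  rw [hdg.fderiv] at hfz
  refine ext_inner_right ℝ fun v => ?_
  have h3 := DFunLike.congr_fun hfz v
  simp only [ContinuousLinearMap.sub_apply, ContinuousLinearMap.smul_apply,
    InnerProductSpace.toDual_apply_apply, innerSL_apply_apply, smul_eq_mul,
    ContinuousLinearMap.zero_apply] at h3
  rw [real_inner_smul_left, eq_inv_mul_iff_mul_eq₀ hMpos.ne']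
  linarith

lemma myPsiSmul (H : E → ℝ) (hreg : ContDiffOn ℝ 1 H {(0:E)}ᶜ)
    (hhom : ∀ t : ℝ, 0 < t → ∀ ξ : E, ξ ≠ 0 → H (t • ξ) = t * H ξ)
    {t : ℝ} (ht : 0 < t) {ξ : E} (hξ : ξ ≠ 0) : Psi H (t • ξ) = t • Psi H ξ := by
  rw [Psi, Psi, if_neg (smul_ne_zero ht.ne' hξ), if_neg hξ,
    myGradHomog H hreg hhom ht hξ, hhom t ht ξ hξ, mul_smul]

lemma myPsiSurj (H : E → ℝ) [Nontrivial E] (hreg : ContDiffOn ℝ 1 H {(0:E)}ᶜ)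
    (hhom : ∀ t : ℝ, 0 < t → ∀ ξ : E, ξ ≠ 0 → H (t • ξ) = t * H ξ)
    (hH0 : H 0 = 0) (hpos : ∀ ξ : E, ξ ≠ 0 → 0 < H ξ)
    {x : E} (hx : x ≠ 0) : ∃ η : E, η ≠ 0 ∧ Psi H η = x := by
  obtain ⟨z, hzK, hzmax⟩ := (myCompactK H hreg hhom hH0 hpos).exists_isMaxOn
    ⟨0, by simp [hH0]⟩ ((innerSL ℝ x).continuous.continuousOn)
  simp only [mem_setOf_eq] at hzK
  have hzmax' : ∀ w : E, H w ≤ 1 → ⟪x, w⟫_ℝ ≤ ⟪x, z⟫_ℝ := fun w hw => hzmax hw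
  obtain ⟨hMpos, hHz1, hgrad⟩ := myMaxChar H hreg hhom hH0 hpos hx hzK hzmax'
  set M := ⟪x, z⟫_ℝ with hM
  have hz0 : z ≠ 0 := by
    rintro rfl; rw [hM, inner_zero_right] at hMpos; exact lt_irrefl 0 hMpos
  refine ⟨M • z, smul_ne_zero hMpos.ne' hz0, ?_⟩
  rw [myPsiSmul H hreg hhom hMpos hz0, Psi, if_neg hz0, hHz1, hgrad, one_smul,
    smul_smul, mul_inv_cancel₀ hMpos.ne', one_smul]

lemma myParallel {z1 z2 : E} (h : ∀ v : E, ⟪z1, v⟫_ℝ = 0 → ⟪z2, v⟫_ℝ = 0) :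
    ∃ c : ℝ, z2 = c • z1 := by
  have hmem : z2 ∈ (ℝ ∙ z1)ᗮᗮ := by
    rw [Submodule.mem_orthogonal]
    intro u hu
    have h1 : ⟪z1, u⟫_ℝ = 0 := by
      rw [Submodule.mem_orthogonal] at hu
      exact real_inner_comm u z1 ▸ hu z1 (Submodule.mem_span_singleton_self z1)
    rw [real_inner_comm]
    exact h u h1
  rw [Submodule.orthogonal_orthogonal] at hmem
  obtain ⟨c, hc⟩ := Submodule.mem_span_singleton.1 hmem
  exact ⟨c, hc.symm⟩

lemma myUniqueAux (H : E → ℝ) (hreg : ContDiffOn ℝ 1 H {(0:E)}ᶜ)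
    (hhom : ∀ t : ℝ, 0 < t → ∀ ξ : E, ξ ≠ 0 → H (t • ξ) = t * H ξ)
    (hH0 : H 0 = 0) (hpos : ∀ ξ : E, ξ ≠ 0 → 0 < H ξ)
    {x z1 z2 : E} (hx : x ≠ 0)
    (hz1K : H z1 ≤ 1) (hz1max : ∀ w : E, H w ≤ 1 → ⟪x, w⟫_ℝ ≤ ⟪x, z1⟫_ℝ)
    (hz2K : H z2 ≤ 1) (hz2max : ∀ w : E, H w ≤ 1 → ⟪x, w⟫_ℝ ≤ ⟪x, z2⟫_ℝ)
    (hsame : ∀ v : E, ⟪z1, v⟫_ℝ = 0 → ⟪z2, v⟫_ℝ = 0) : z1 = z2 := by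
  obtain ⟨hM1pos, _, _⟩ := myMaxChar H hreg hhom hH0 hpos hx hz1K hz1max
  have hMeq : ⟪x, z1⟫_ℝ = ⟪x, z2⟫_ℝ :=
    le_antisymm (hz2max z1 hz1K) (hz1max z2 hz2K)
  obtain ⟨c, hc⟩ := myParallel hsame
  have : ⟪x, z2⟫_ℝ = c * ⟪x, z1⟫_ℝ := by rw [hc, real_inner_smul_right]
  have hc1 : c = 1 := by
    have h' : c * ⟪x, z1⟫_ℝ = 1 * ⟪x, z1⟫_ℝ := by rw [one_mul]; linarith
    exact mul_right_cancel₀ hM1pos.ne' h'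
  rw [hc, hc1, one_smul]

lemma myPsiOfMax (H : E → ℝ) (hreg : ContDiffOn ℝ 1 H {(0:E)}ᶜ)
    (hhom : ∀ t : ℝ, 0 < t → ∀ ξ : E, ξ ≠ 0 → H (t • ξ) = t * H ξ)
    (hH0 : H 0 = 0) (hpos : ∀ ξ : E, ξ ≠ 0 → 0 < H ξ)
    {x z : E} (hx : x ≠ 0) (hzK : H z ≤ 1)
    (hzmax : ∀ w : E, H w ≤ 1 → ⟪x, w⟫_ℝ ≤ ⟪x, z⟫_ℝ) :
    Psi H z = (⟪x, z⟫_ℝ)⁻¹ • x := by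
  obtain ⟨hMpos, hHz1, hgrad⟩ := myMaxChar H hreg hhom hH0 hpos hx hzK hzmax
  have hz0 : z ≠ 0 := by
    rintro rfl; rw [inner_zero_right] at hMpos; exact lt_irrefl 0 hMpos
  rw [Psi, if_neg hz0, hHz1, hgrad, one_smul]

/-- Uniqueness of the maximizer, under condition (7.1). -/
lemma myUnique7 (H : E → ℝ) [Nontrivial E] (hreg : ContDiffOn ℝ 1 H {(0:E)}ᶜ)
    (hhom : ∀ t : ℝ, 0 < t → ∀ ξ : E, ξ ≠ 0 → H (t • ξ) = t * H ξ)
    (hH0 : H 0 = 0) (hpos : ∀ ξ : E, ξ ≠ 0 → 0 < H ξ)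
    (hcond : ∀ ξ η : E, (⟪Psi H ξ, η⟫_ℝ = 0 ↔ ⟪ξ, Psi H η⟫_ℝ = 0))
    {x z1 z2 : E} (hx : x ≠ 0)
    (hz1K : H z1 ≤ 1) (hz1max : ∀ w : E, H w ≤ 1 → ⟪x, w⟫_ℝ ≤ ⟪x, z1⟫_ℝ)
    (hz2K : H z2 ≤ 1) (hz2max : ∀ w : E, H w ≤ 1 → ⟪x, w⟫_ℝ ≤ ⟪x, z2⟫_ℝ) :
    z1 = z2 := by
  refine myUniqueAux H hreg hhom hH0 hpos hx hz1K hz1max hz2K hz2max fun v hv => ?_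
  rcases eq_or_ne v 0 with rfl | hv0
  · simp
  obtain ⟨η, hη0, hηv⟩ := myPsiSurj H hreg hhom hH0 hpos hv0
  have hMeq : ⟪x, z1⟫_ℝ = ⟪x, z2⟫_ℝ :=
    le_antisymm (hz2max z1 hz1K) (hz1max z2 hz2K)
  have hPsi1 : Psi H z1 = (⟪x, z1⟫_ℝ)⁻¹ • x := myPsiOfMax H hreg hhom hH0 hpos hx hz1K hz1max
  have hPsi2 : Psi H z2 = (⟪x, z2⟫_ℝ)⁻¹ • x := myPsiOfMax H hreg hhom hH0 hpos hx hz2K hz2max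
  have hPP : Psi H z1 = Psi H z2 := by rw [hPsi1, hPsi2, hMeq]
  have h1 : ⟪z1, Psi H η⟫_ℝ = 0 := by rw [hηv]; exact hv
  have h2 : ⟪Psi H z1, η⟫_ℝ = 0 := (hcond z1 η).2 h1
  have h3 : ⟪Psi H z2, η⟫_ℝ = 0 := by rw [← hPP]; exact h2
  have h4 : ⟪z2, Psi H η⟫_ℝ = 0 := (hcond z2 η).1 h3
  rw [hηv] at h4; exact h4

/-- Uniqueness of the maximizer, under condition (1.12). -/
lemma myUnique12 (H : E → ℝ) (hreg : ContDiffOn ℝ 1 H {(0:E)}ᶜ)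
    (hhom : ∀ t : ℝ, 0 < t → ∀ ξ : E, ξ ≠ 0 → H (t • ξ) = t * H ξ)
    (hH0 : H 0 = 0) (hpos : ∀ ξ : E, ξ ≠ 0 → 0 < H ξ)
    (hcond : ∀ ξ x : E, Real.sign ⟪Psi H ξ, Psi (dualFn H) x⟫_ℝ = Real.sign ⟪ξ, x⟫_ℝ)
    {x z1 z2 : E} (hx : x ≠ 0)
    (hz1K : H z1 ≤ 1) (hz1max : ∀ w : E, H w ≤ 1 → ⟪x, w⟫_ℝ ≤ ⟪x, z1⟫_ℝ)
    (hz2K : H z2 ≤ 1) (hz2max : ∀ w : E, H w ≤ 1 → ⟪x, w⟫_ℝ ≤ ⟪x, z2⟫_ℝ) :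
    z1 = z2 := by
  refine myUniqueAux H hreg hhom hH0 hpos hx hz1K hz1max hz2K hz2max fun v hv => ?_
  have hMeq : ⟪x, z1⟫_ℝ = ⟪x, z2⟫_ℝ :=
    le_antisymm (hz2max z1 hz1K) (hz1max z2 hz2K)
  have hPsi1 : Psi H z1 = (⟪x, z1⟫_ℝ)⁻¹ • x := myPsiOfMax H hreg hhom hH0 hpos hx hz1K hz1max
  have hPsi2 : Psi H z2 = (⟪x, z2⟫_ℝ)⁻¹ • x := myPsiOfMax H hreg hhom hH0 hpos hx hz2K hz2max
  have hPP : Psi H z1 = Psi H z2 := by rw [hPsi1, hPsi2, hMeq]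
  have h1 := hcond z1 v
  have h2 := hcond z2 v
  rw [hPP] at h1
  rw [h1] at h2
  rw [← Real.sign_eq_zero_iff] at hv ⊢
  rw [← h2, hv]

/-- Continuity of the (unique) argmax. -/
lemma myZcont (H : E → ℝ) [Nontrivial E] (hreg : ContDiffOn ℝ 1 H {(0:E)}ᶜ)
    (hhom : ∀ t : ℝ, 0 < t → ∀ ξ : E, ξ ≠ 0 → H (t • ξ) = t * H ξ)
    (hH0 : H 0 = 0) (hpos : ∀ ξ : E, ξ ≠ 0 → 0 < H ξ)
    (Z : E → E) (hZK : ∀ x : E, H (Z x) ≤ 1)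
    (hZmax : ∀ x w : E, H w ≤ 1 → ⟪x, w⟫_ℝ ≤ ⟪x, Z x⟫_ℝ)
    (huniq : ∀ x : E, x ≠ 0 → ∀ z : E, H z ≤ 1 →
      (∀ w : E, H w ≤ 1 → ⟪x, w⟫_ℝ ≤ ⟪x, z⟫_ℝ) → z = Z x)
    {x : E} (hx : x ≠ 0) {ε : ℝ} (hε : 0 < ε) :
    ∀ᶠ x' in 𝓝 x, ‖Z x' - Z x‖ < ε := by
  have hK := myCompactK H hreg hhom hH0 hpos
  obtain ⟨R, hR0, hR⟩ := hK.isBounded.exists_pos_norm_le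
  set Kc : Set E := {w : E | H w ≤ 1} ∩ {w : E | ε ≤ dist w (Z x)} with hKc
  have hKcclosed : IsClosed {w : E | ε ≤ dist w (Z x)} :=
    isClosed_le continuous_const (continuous_id.dist continuous_const)
  have hKccpt : IsCompact Kc := hK.inter_right hKcclosed
  rcases Kc.eq_empty_or_nonempty with hemp | hne
  · filter_upwards with x'
    have h1 : Z x' ∉ Kc := by rw [hemp]; exact notMem_empty _
    simp only [hKc, mem_inter_iff, mem_setOf_eq, not_and, not_le] at h1
    rw [← dist_eq_norm]
    exact h1 (hZK x')
  obtain ⟨w0, hw0mem, hw0max⟩ := hKccpt.exists_isMaxOn hne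
    ((innerSL ℝ x).continuous.continuousOn)
  have hw0K : H w0 ≤ 1 := hw0mem.1
  have hlt : ⟪x, w0⟫_ℝ < ⟪x, Z x⟫_ℝ := by
    rcases lt_or_eq_of_le (hZmax x w0 hw0K) with h | h
    · exact h
    · exfalso
      have hw0uniq : w0 = Z x := by
        refine huniq x hx w0 hw0K fun w hw => ?_
        rw [h]; exact hZmax x w hw
      have := hw0mem.2
      rw [hw0uniq] at this
      simp only [mem_setOf_eq, dist_self] at this
      linarith
  set δ := (⟪x, Z x⟫_ℝ - ⟪x, w0⟫_ℝ) / (2 * R + 1) with hδ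
  have hδpos : 0 < δ := by apply div_pos (by linarith) (by linarith)
  filter_upwards [Metric.ball_mem_nhds x hδpos] with x' hx'
  rw [Metric.mem_ball, dist_eq_norm] at hx'
  by_contra hcon
  push_neg at hcon
  have hZx'Kc : Z x' ∈ Kc := ⟨hZK x', by simpa [dist_eq_norm] using hcon⟩
  have h1 : ⟪x, Z x'⟫_ℝ ≤ ⟪x, w0⟫_ℝ := hw0max hZx'Kc
  have h2 : ⟪x', Z x⟫_ℝ ≤ ⟪x', Z x'⟫_ℝ := hZmax x' _ (hZK x)
  have hb1 : |⟪x' - x, Z x'⟫_ℝ| ≤ δ * R := by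
    calc |⟪x' - x, Z x'⟫_ℝ| ≤ ‖x' - x‖ * ‖Z x'‖ := abs_real_inner_le_norm _ _
      _ ≤ δ * R := by
          apply mul_le_mul hx'.le (hR _ (hZK x')) (norm_nonneg _) hδpos.le
  have hb2 : |⟪x' - x, Z x⟫_ℝ| ≤ δ * R := by
    calc |⟪x' - x, Z x⟫_ℝ| ≤ ‖x' - x‖ * ‖Z x‖ := abs_real_inner_le_norm _ _
      _ ≤ δ * R := by
          apply mul_le_mul hx'.le (hR _ (hZK x)) (norm_nonneg _) hδpos.le
  have he1 : ⟪x', Z x'⟫_ℝ = ⟪x, Z x'⟫_ℝ + ⟪x' - x, Z x'⟫_ℝ := by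
    rw [← inner_add_left]; norm_num
  have he2 : ⟪x', Z x⟫_ℝ = ⟪x, Z x⟫_ℝ + ⟪x' - x, Z x⟫_ℝ := by
    rw [← inner_add_left]; norm_num
  have hgap : ⟪x, Z x⟫_ℝ - ⟪x, w0⟫_ℝ = δ * (2 * R + 1) := by
    rw [hδ]; field_simp
  have habs1 := abs_le.1 hb1
  have habs2 := abs_le.1 hb2
  nlinarith [hδpos, hR0]

/-- The dual function equals the support function of `K` at nonzero points. -/
lemma myDualEq (H : E → ℝ) [Nontrivial E] (hreg : ContDiffOn ℝ 1 H {(0:E)}ᶜ)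
    (hhom : ∀ t : ℝ, 0 < t → ∀ ξ : E, ξ ≠ 0 → H (t • ξ) = t * H ξ)
    (hH0 : H 0 = 0) (hpos : ∀ ξ : E, ξ ≠ 0 → 0 < H ξ)
    {x z : E} (hx : x ≠ 0) (hzK : H z ≤ 1)
    (hzmax : ∀ w : E, H w ≤ 1 → ⟪x, w⟫_ℝ ≤ ⟪x, z⟫_ℝ) :
    dualFn H x = ⟪x, z⟫_ℝ := by
  obtain ⟨hMpos, hHz1, _⟩ := myMaxChar H hreg hhom hH0 hpos hx hzK hzmax
  have hz0 : z ≠ 0 := by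
    rintro rfl; rw [inner_zero_right] at hMpos; exact lt_irrefl 0 hMpos
  haveI : Nonempty (Metric.sphere (0:E) 1) :=
    (NormedSpace.sphere_nonempty.2 zero_le_one).to_subtype
  have hub : ∀ ξ : Metric.sphere (0:E) 1, ⟪x, (ξ : E)⟫_ℝ / H ξ ≤ ⟪x, z⟫_ℝ := by
    rintro ⟨ξ, hξ⟩
    have hξ0 : ξ ≠ 0 := by
      simp only [mem_sphere_zero_iff_norm] at hξ
      intro h; rw [h] at hξ; simp at hξ
    have hHξ : 0 < H ξ := hpos ξ hξ0
    have hmem : H ((H ξ)⁻¹ • ξ) ≤ 1 := by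
      rw [hhom _ (by positivity) ξ hξ0, inv_mul_cancel₀ hHξ.ne']
    have h1 := hzmax _ hmem
    rw [real_inner_smul_right] at h1
    rw [div_eq_inv_mul]
    exact h1
  apply le_antisymm
  · exact ciSup_le hub
  · have humem : ‖z‖⁻¹ • z ∈ Metric.sphere (0:E) 1 := by
      simp [norm_smul, inv_mul_cancel₀ (norm_ne_zero_iff.2 hz0)]
    have hval : ⟪x, ((⟨‖z‖⁻¹ • z, humem⟩ : Metric.sphere (0:E) 1) : E)⟫_ℝ
        / H ((⟨‖z‖⁻¹ • z, humem⟩ : Metric.sphere (0:E) 1) : E) = ⟪x, z⟫_ℝ := by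
      have hnz : (0:ℝ) < ‖z‖ := norm_pos_iff.2 hz0
      simp only [real_inner_smul_right]
      rw [hhom _ (inv_pos.2 hnz) z hz0, hHz1, mul_one]
      field_simp
    rw [← hval]
    exact le_ciSup ⟨⟪x, z⟫_ℝ, by rintro y ⟨ξ, rfl⟩; exact hub ξ⟩ _

/-- Computation of `Psi (dualFn H) x` at nonzero `x`, given unique maximizers. -/
lemma myPsiStar (H : E → ℝ) [Nontrivial E] (hreg : ContDiffOn ℝ 1 H {(0:E)}ᶜ)
    (hhom : ∀ t : ℝ, 0 < t → ∀ ξ : E, ξ ≠ 0 → H (t • ξ) = t * H ξ)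
    (hH0 : H 0 = 0) (hpos : ∀ ξ : E, ξ ≠ 0 → 0 < H ξ)
    (Z : E → E) (hZK : ∀ x : E, H (Z x) ≤ 1)
    (hZmax : ∀ x w : E, H w ≤ 1 → ⟪x, w⟫_ℝ ≤ ⟪x, Z x⟫_ℝ)
    (huniq : ∀ x : E, x ≠ 0 → ∀ z : E, H z ≤ 1 →
      (∀ w : E, H w ≤ 1 → ⟪x, w⟫_ℝ ≤ ⟪x, z⟫_ℝ) → z = Z x)
    {x : E} (hx : x ≠ 0) :
    Psi (dualFn H) x = ⟪x, Z x⟫_ℝ • Z x := by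
  set M : E → ℝ := fun w => ⟪w, Z w⟫_ℝ with hMdef
  have hMd : HasFDerivAt M (innerSL ℝ (Z x)) x := by
    rw [hasFDerivAt_iff_isLittleO_nhds_zero]
    rw [Asymptotics.isLittleO_iff]
    intro c hc
    have hev := myZcont H hreg hhom hH0 hpos Z hZK hZmax huniq hx hc
    have hev2 : ∀ᶠ v in 𝓝 (0:E), ‖Z (x + v) - Z x‖ < c := by
      have hcont : Tendsto (fun v : E => x + v) (𝓝 0) (𝓝 x) := by
        exact (continuous_add_left x).tendsto' (0:E) x (by simp)
      exact hcont.eventually hev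
    filter_upwards [hev2] with v hv
    have low : (0:ℝ) ≤ M (x + v) - M x - ⟪Z x, v⟫_ℝ := by
      have h1 : ⟪x + v, Z x⟫_ℝ ≤ M (x + v) := hZmax (x + v) (Z x) (hZK x)
      have h2 : ⟪x + v, Z x⟫_ℝ = ⟪x, Z x⟫_ℝ + ⟪v, Z x⟫_ℝ := inner_add_left _ _ _
      have h3 : ⟪Z x, v⟫_ℝ = ⟪v, Z x⟫_ℝ := real_inner_comm _ _
      simp only [hMdef] at h1 ⊢
      linarith
    have up : M (x + v) - M x - ⟪Z x, v⟫_ℝ ≤ ⟪v, Z (x + v) - Z x⟫_ℝ := by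
      have h1 : ⟪x, Z (x + v)⟫_ℝ ≤ M x := hZmax x (Z (x + v)) (hZK (x + v))
      have h2 : M (x + v) = ⟪x, Z (x + v)⟫_ℝ + ⟪v, Z (x + v)⟫_ℝ := inner_add_left _ _ _
      have h3 : ⟪Z x, v⟫_ℝ = ⟪v, Z x⟫_ℝ := real_inner_comm _ _
      have h4 : ⟪v, Z (x + v) - Z x⟫_ℝ = ⟪v, Z (x + v)⟫_ℝ - ⟪v, Z x⟫_ℝ :=
        inner_sub_right _ _ _
      simp only [hMdef] at h1 h2 ⊢
      linarith
    have hb : |⟪v, Z (x + v) - Z x⟫_ℝ| ≤ ‖v‖ * c := by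
      calc |⟪v, Z (x + v) - Z x⟫_ℝ| ≤ ‖v‖ * ‖Z (x + v) - Z x‖ := abs_real_inner_le_norm _ _
        _ ≤ ‖v‖ * c := by
            apply mul_le_mul_of_nonneg_left hv.le (norm_nonneg _)
    simp only [innerSL_apply_apply]
    rw [Real.norm_eq_abs, abs_le]
    have habs := abs_le.1 hb
    have hcm : ‖v‖ * c = c * ‖v‖ := mul_comm _ _
    constructor
    · have h0 : (0:ℝ) ≤ c * ‖v‖ := by positivity
      linarith
    · linarith [habs.2]
  have heq : dualFn H =ᶠ[𝓝 x] M := by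
    filter_upwards [isOpen_compl_singleton.mem_nhds hx] with w (hw : w ≠ 0)
    exact myDualEq H hreg hhom hH0 hpos hw (hZK w) (hZmax w)
  have hdual : HasFDerivAt (dualFn H) (innerSL ℝ (Z x)) x :=
    hMd.congr_of_eventuallyEq heq
  have hsl : innerSL ℝ (Z x) = InnerProductSpace.toDual ℝ E (Z x) := by
    ext v; simp [InnerProductSpace.toDual_apply_apply]
  have hgradAt : HasGradientAt (dualFn H) (Z x) x := by
    rw [hasGradientAt_iff_hasFDerivAt, ← hsl]
    exact hdual
  have hgrad : gradient (dualFn H) x = Z x := hgradAt.gradient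
  have hval : dualFn H x = ⟪x, Z x⟫_ℝ :=
    myDualEq H hreg hhom hH0 hpos hx (hZK x) (hZmax x)
  rw [Psi, if_neg hx, hgrad, hval]

/-- `Psi (dualFn H)` inverts `Psi H`, given unique maximizers. -/
lemma myPsiStarPsi (H : E → ℝ) [Nontrivial E] (hreg : ContDiffOn ℝ 1 H {(0:E)}ᶜ)
    (hhom : ∀ t : ℝ, 0 < t → ∀ ξ : E, ξ ≠ 0 → H (t • ξ) = t * H ξ)
    (hH0 : H 0 = 0) (hpos : ∀ ξ : E, ξ ≠ 0 → 0 < H ξ)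
    (hconv : Convex ℝ {ξ : E | H ξ < 1})
    (Z : E → E) (hZK : ∀ x : E, H (Z x) ≤ 1)
    (hZmax : ∀ x w : E, H w ≤ 1 → ⟪x, w⟫_ℝ ≤ ⟪x, Z x⟫_ℝ)
    (huniq : ∀ x : E, x ≠ 0 → ∀ z : E, H z ≤ 1 →
      (∀ w : E, H w ≤ 1 → ⟪x, w⟫_ℝ ≤ ⟪x, z⟫_ℝ) → z = Z x)
    {η : E} (hη : η ≠ 0) :
    Psi (dualFn H) (Psi H η) = η := by
  have hHη : 0 < H η := hpos η hη
  have hEuler : ⟪gradient H η, η⟫_ℝ = H η := myEuler H hreg hhom hη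
  set x : E := Psi H η with hxdef
  have hxeq : x = H η • gradient H η := by rw [hxdef, Psi, if_neg hη]
  have hxη : ⟪x, η⟫_ℝ = H η * H η := by
    rw [hxeq, real_inner_smul_left, hEuler]
  have hx0 : x ≠ 0 := by
    intro h
    rw [h, inner_zero_left] at hxη
    nlinarith
  set z₀ : E := (H η)⁻¹ • η with hz₀
  have hz₀K : H z₀ ≤ 1 := by
    rw [hz₀, hhom _ (inv_pos.2 hHη) η hη, inv_mul_cancel₀ hHη.ne']
  have hxz₀ : ⟪x, z₀⟫_ℝ = H η := by
    rw [hz₀, real_inner_smul_right, hxη]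
    field_simp
  have hz₀max : ∀ w : E, H w ≤ 1 → ⟪x, w⟫_ℝ ≤ ⟪x, z₀⟫_ℝ := by
    intro w hw
    rw [hxz₀, hxeq, real_inner_smul_left]
    have h1 : ⟪gradient H η, w⟫_ℝ ≤ H w := mySupport H hreg hhom hH0 hpos hconv hη w
    nlinarith
  have hZx : z₀ = Z x := huniq x hx0 z₀ hz₀K hz₀max
  have h2 := myPsiStar H hreg hhom hH0 hpos Z hZK hZmax huniq hx0
  rw [h2, ← hZx, hxz₀, hz₀, smul_smul, mul_inv_cancel₀ hHη.ne', one_smul]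

/-- Bridge: condition (7.1) implies the sign identity for `Psi H` on both sides. -/
lemma myBridge7 (H : E → ℝ) (hreg : ContDiffOn ℝ 1 H {(0:E)}ᶜ)
    (hhom : ∀ t : ℝ, 0 < t → ∀ ξ : E, ξ ≠ 0 → H (t • ξ) = t * H ξ)
    (hH0 : H 0 = 0) (hpos : ∀ ξ : E, ξ ≠ 0 → 0 < H ξ)
    (hcond : ∀ ξ η : E, (⟪Psi H ξ, η⟫_ℝ = 0 ↔ ⟪ξ, Psi H η⟫_ℝ = 0))
    (ξ η : E) : Real.sign ⟪Psi H ξ, η⟫_ℝ = Real.sign ⟪ξ, Psi H η⟫_ℝ := by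
  rcases eq_or_ne ξ 0 with rfl | hξ
  · rw [Psi, if_pos rfl, inner_zero_left, inner_zero_left]
  have hHξ : 0 < H ξ := hpos ξ hξ
  have hEuler : ⟪gradient H ξ, ξ⟫_ℝ = H ξ := myEuler H hreg hhom hξ
  have hPsiξ : Psi H ξ = H ξ • gradient H ξ := by rw [Psi, if_neg hξ]
  have hself : ⟪Psi H ξ, ξ⟫_ℝ = H ξ * H ξ := by
    rw [hPsiξ, real_inner_smul_left, hEuler]
  set g : E → ℝ := fun w => ⟪ξ, Psi H w⟫_ℝ with hg
  -- generic positivity/negativity propagation on open half-spaces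
  have key : ∀ p w : E, ∀ s : ℝ, (0 < s * ⟪Psi H ξ, p⟫_ℝ) → (0 < s * g p) →
      (0 < s * ⟪Psi H ξ, w⟫_ℝ) → 0 < s * g w := by
    intro p w s hp hgp hw
    set A : Set E := {u : E | 0 < s * ⟪Psi H ξ, u⟫_ℝ} with hA
    have hlin : IsLinearMap ℝ (fun u : E => s * ⟪Psi H ξ, u⟫_ℝ) := by
      constructor
      · intro a b; rw [inner_add_right]; ring
      · intro c a; rw [real_inner_smul_right]; simp [smul_eq_mul]; ring
    have hconvA : Convex ℝ A := convex_halfSpace_gt hlin 0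
    have hA0 : (0:E) ∉ A := by simp [hA]
    have hAne : A ⊆ {(0:E)}ᶜ := fun u hu => by
      intro h0; rw [h0] at hu; exact hA0 hu
    have hgcont : ContinuousOn g A := by
      have h1 : ContinuousOn (fun w : E => ⟪ξ, H w • gradient H w⟫_ℝ) {(0:E)}ᶜ :=
        continuousOn_const.inner (myPsiContOn H hreg)
      apply (h1.mono hAne).congr
      intro u hu
      have hu0 : u ≠ 0 := hAne hu
      show ⟪ξ, Psi H u⟫_ℝ = _
      rw [Psi, if_neg hu0]
    have hgne : ∀ u ∈ A, g u ≠ 0 := by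
      intro u hu hgu
      have := (hcond ξ u).2 hgu
      rw [hA, mem_setOf_eq, this, mul_zero] at hu
      exact lt_irrefl 0 hu
    have himg : IsPreconnected (g '' A) :=
      (hconvA.isPreconnected).image g hgcont
    by_contra hcon
    push_neg at hcon
    have hgw0 : g w ≠ 0 := hgne w hw
    have hgwneg : s * g w < 0 := by
      rcases lt_trichotomy (s * g w) 0 with h | h | h
      · exact h
      · exfalso
        have hs0 : s ≠ 0 := by
          intro h0; rw [h0, zero_mul] at hp; exact lt_irrefl 0 hp
        rcases mul_eq_zero.1 h with h' | h'
        · exact hs0 h'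
        · exact hgw0 h'
      · exact absurd h (not_lt.2 hcon)
    -- 0 lies between g w and g p up to sign s; find a zero of g on A
    have h0mem : (0:ℝ) ∈ g '' A := by
      have hOC : Set.OrdConnected (g '' A) := himg.ordConnected
      rcases lt_trichotomy s 0 with hs | hs | hs
      ·
        have hgw : 0 < g w := by nlinarith
        have hgp' : g p < 0 := by nlinarith
        exact hOC.out ⟨p, hp, rfl⟩ ⟨w, hw, rfl⟩ ⟨hgp'.le, hgw.le⟩
      · exfalso; rw [hs, zero_mul] at hp; exact lt_irrefl 0 hp
      · have hgw : g w < 0 := by nlinarith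
        have hgp' : 0 < g p := by nlinarith
        exact hOC.out ⟨w, hw, rfl⟩ ⟨p, hp, rfl⟩ ⟨hgw.le, hgp'.le⟩
    obtain ⟨u, hu, hgu⟩ := h0mem
    exact hgne u hu hgu
  rcases lt_trichotomy (⟪Psi H ξ, η⟫_ℝ) 0 with hneg | hzero | hposi
  · -- negative side: use p = -ξ, s = -1
    have hPη : ⟪Psi H ξ, -ξ⟫_ℝ = -(H ξ * H ξ) := by rw [inner_neg_right, hself]
    have hξ' : (-ξ : E) ≠ 0 := neg_ne_zero.2 hξ
    have hEuler' : ⟪gradient H (-ξ), -ξ⟫_ℝ = H (-ξ) := myEuler H hreg hhom hξ'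
    have hgp : g (-ξ) = -(H (-ξ) * H (-ξ)) := by
      rw [hg]
      simp only
      rw [Psi, if_neg hξ', real_inner_smul_right]
      have : ⟪ξ, gradient H (-ξ)⟫_ℝ = -(H (-ξ)) := by
        have h1 : ⟪gradient H (-ξ), -ξ⟫_ℝ = -⟪gradient H (-ξ), ξ⟫_ℝ := inner_neg_right _ _
        rw [h1] at hEuler'
        rw [real_inner_comm]; linarith
      rw [this]; ring
    have hHξ' : 0 < H (-ξ) := hpos _ hξ'
    have h1 := key (-ξ) η (-1) (by rw [hPη]; nlinarith) (by rw [hgp]; nlinarith)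
      (by nlinarith)
    have hgη : g η < 0 := by nlinarith
    rw [Real.sign_of_neg hneg, Real.sign_of_neg hgη]
  · have h1 : g η = 0 := (hcond ξ η).1 hzero
    rw [hzero, show ⟪ξ, Psi H η⟫_ℝ = g η from rfl, h1]
  · have h1 := key ξ η 1 (by rw [one_mul, hself]; nlinarith)
      (by
        rw [one_mul]
        show (0:ℝ) < ⟪ξ, Psi H ξ⟫_ℝ
        rw [real_inner_comm, hself]; nlinarith)
      (by rw [one_mul]; exact hposi)
    have hgη : 0 < g η := by nlinarith
    rw [Real.sign_of_pos hposi, Real.sign_of_pos hgη]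

/-- Proposition 7.1: for `H ∈ C¹(ℝⁿ \ {0})` positively 1-homogeneous, positive
off the origin, with strictly convex unit ball, condition (1.12), namely
`sgn⟨H(ξ)∇H(ξ), H*(x)∇H*(x)⟩ = sgn⟨ξ, x⟩` for all `ξ, x`, is equivalent to condition (7.1):
`⟨H(ξ)∇H(ξ), η⟩ = 0 ↔ ⟨ξ, H(η)∇H(η)⟩ = 0` for all `ξ, η`. -/
theorem condition_1_12_iff_7_1 {n : ℕ} (H : EuclideanSpace ℝ (Fin n) → ℝ)
    (hreg : ContDiffOn ℝ 1 H {(0 : EuclideanSpace ℝ (Fin n))}ᶜ)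
    (hhom : ∀ t : ℝ, 0 < t → ∀ ξ : EuclideanSpace ℝ (Fin n), ξ ≠ 0 → H (t • ξ) = t * H ξ)
    (hH0 : H 0 = 0)
    (hpos : ∀ ξ : EuclideanSpace ℝ (Fin n), ξ ≠ 0 → 0 < H ξ)
    (hconv : StrictConvex ℝ {ξ : EuclideanSpace ℝ (Fin n) | H ξ < 1}) :
    (∀ ξ x : EuclideanSpace ℝ (Fin n),
        Real.sign ⟪Psi H ξ, Psi (dualFn H) x⟫_ℝ = Real.sign ⟪ξ, x⟫_ℝ)
      ↔ ∀ ξ η : EuclideanSpace ℝ (Fin n),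
          (⟪Psi H ξ, η⟫_ℝ = 0 ↔ ⟪ξ, Psi H η⟫_ℝ = 0) := by
  have hconv' : Convex ℝ {ξ : EuclideanSpace ℝ (Fin n) | H ξ < 1} := hconv.convex
  constructor
  · intro hcond12 ξ η
    rcases eq_or_ne ξ 0 with rfl | hξ
    · simp [Psi]
    rcases eq_or_ne η 0 with rfl | hη
    · simp [Psi]
    haveI : Nontrivial (EuclideanSpace ℝ (Fin n)) := ⟨⟨ξ, 0, hξ⟩⟩
    have hex : ∀ x : EuclideanSpace ℝ (Fin n), ∃ z : EuclideanSpace ℝ (Fin n),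
        H z ≤ 1 ∧ ∀ w : EuclideanSpace ℝ (Fin n), H w ≤ 1 → ⟪x, w⟫_ℝ ≤ ⟪x, z⟫_ℝ := by
      intro x
      obtain ⟨z, hz, hmax⟩ := (myCompactK H hreg hhom hH0 hpos).exists_isMaxOn
        ⟨0, by simp [hH0]⟩ ((innerSL ℝ x).continuous.continuousOn)
      exact ⟨z, hz, fun w hw => hmax hw⟩
    choose Z hZK hZmax using hex
    have huniq : ∀ x : EuclideanSpace ℝ (Fin n), x ≠ 0 → ∀ z : EuclideanSpace ℝ (Fin n),
        H z ≤ 1 → (∀ w : EuclideanSpace ℝ (Fin n), H w ≤ 1 → ⟪x, w⟫_ℝ ≤ ⟪x, z⟫_ℝ) → z = Z x :=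
      fun x hx z hzK hzmax =>
        myUnique12 H hreg hhom hH0 hpos hcond12 hx hzK hzmax (hZK x) (hZmax x)
    have hinv := myPsiStarPsi H hreg hhom hH0 hpos hconv' Z hZK hZmax huniq hη
    have h := hcond12 ξ (Psi H η)
    rw [hinv] at h
    have h2 : Real.sign ⟪Psi H ξ, η⟫_ℝ = 0 ↔ Real.sign ⟪ξ, Psi H η⟫_ℝ = 0 := by rw [h]
    rw [Real.sign_eq_zero_iff, Real.sign_eq_zero_iff] at h2
    exact h2
  · intro hcond7 ξ x
    rcases eq_or_ne ξ 0 with rfl | hξ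
    · simp [Psi]
    rcases eq_or_ne x 0 with rfl | hx
    · simp [Psi]
    haveI : Nontrivial (EuclideanSpace ℝ (Fin n)) := ⟨⟨ξ, 0, hξ⟩⟩
    have hex : ∀ x : EuclideanSpace ℝ (Fin n), ∃ z : EuclideanSpace ℝ (Fin n),
        H z ≤ 1 ∧ ∀ w : EuclideanSpace ℝ (Fin n), H w ≤ 1 → ⟪x, w⟫_ℝ ≤ ⟪x, z⟫_ℝ := by
      intro x
      obtain ⟨z, hz, hmax⟩ := (myCompactK H hreg hhom hH0 hpos).exists_isMaxOn
        ⟨0, by simp [hH0]⟩ ((innerSL ℝ x).continuous.continuousOn)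
      exact ⟨z, hz, fun w hw => hmax hw⟩
    choose Z hZK hZmax using hex
    have huniq : ∀ x : EuclideanSpace ℝ (Fin n), x ≠ 0 → ∀ z : EuclideanSpace ℝ (Fin n),
        H z ≤ 1 → (∀ w : EuclideanSpace ℝ (Fin n), H w ≤ 1 → ⟪x, w⟫_ℝ ≤ ⟪x, z⟫_ℝ) → z = Z x :=
      fun x hx z hzK hzmax =>
        myUnique7 H hreg hhom hH0 hpos hcond7 hx hzK hzmax (hZK x) (hZmax x)
    obtain ⟨η, hη0, hηx⟩ := myPsiSurj H hreg hhom hH0 hpos hx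
    have hinv := myPsiStarPsi H hreg hhom hH0 hpos hconv' Z hZK hZmax huniq hη0
    rw [hηx] at hinv
    rw [hinv, ← hηx]
    exact myBridge7 H hreg hhom hH0 hpos hcond7 ξ η

end
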